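/- Let L_M be an Orlicz space on (0,1) associated with a convex function M satisfying M(0)=0, M(t)>0 for t>0, lim_{t→0} M(t)/t = 0 and lim_{t→∞} t/M(t) = 0. Then for every x ∈ L_M, φ(x) = lim_{n→∞} (1/n)‖σ_n(x*)‖_{L_M} = 0. -/

import Mathlib

open MeasureTheory Filter Set Topology

/-- Decreasing rearrangement of `f`, viewed as a function on the domain `D ⊆ ℝ`:
`x*(t) = inf { s ≥ 0 : m({u ∈ D : |f u| ≥ s}) ≤ t }`. -/
noncomputable def rearr (D : Set ℝ) (f : ℝ → ℝ) (t : ℝ) : ℝ :=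
  sInf {s : ℝ | 0 ≤ s ∧ volume {u : ℝ | u ∈ D ∧ s ≤ |f u|} ≤ ENNReal.ofReal t}

/-- `submaj D x y` means `y ≺≺ x` (Hardy–Littlewood–Pólya submajorization):
`∫₀ᵗ y* ≤ ∫₀ᵗ x*` for all `t ≥ 0`. -/
def submaj (D : Set ℝ) (x y : ℝ → ℝ) : Prop :=
  ∀ t : ℝ, 0 ≤ t →
    (∫ s in Set.Ioc (0:ℝ) t, rearr D y s) ≤ ∫ s in Set.Ioc (0:ℝ) t, rearr D x s

/-- Dilation operator on functions on `(0,∞)`: `(σ_τ f)(s) = f (s/τ)`. -/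
noncomputable def dilInf (τ : ℝ) (f : ℝ → ℝ) : ℝ → ℝ := fun s => f (s / τ)

/-- Dilation operator on functions on `(0,1)`. -/
noncomputable def dilOne (τ : ℝ) (f : ℝ → ℝ) : ℝ → ℝ :=
  fun s => if s ≤ min 1 τ then f (s / τ) else 0

/-- `x ∈ L¹ + L∞` on the domain `D`. -/
def MemL1L (D : Set ℝ) (x : ℝ → ℝ) : Prop :=
  ∃ g h : ℝ → ℝ, (∀ t ∈ D, x t = g t + h t) ∧ MeasureTheory.IntegrableOn g D ∧
    ∃ C : ℝ, ∀ t ∈ D, |h t| ≤ C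

/-- A symmetric Banach function space on the domain `D`, with dilation operators `dl`. -/
structure SymmSpace (D : Set ℝ) (dl : ℝ → (ℝ → ℝ) → ℝ → ℝ) where
  Mem : (ℝ → ℝ) → Prop
  nrm : (ℝ → ℝ) → ℝ
  zero_mem : Mem 0
  add_mem : ∀ f g, Mem f → Mem g → Mem (f + g)
  smul_mem : ∀ (c : ℝ) (f), Mem f → Mem (c • f)
  mem_meas : ∀ f, Mem f → AEMeasurable f
  nrm_nonneg : ∀ f, 0 ≤ nrm f
  nrm_add_le : ∀ f g, Mem f → Mem g → nrm (f + g) ≤ nrm f + nrm g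
  nrm_smul : ∀ (c : ℝ) (f), nrm (c • f) = |c| * nrm f
  ideal : ∀ f g, Mem f → (∀ t ∈ D, |g t| ≤ |f t|) → Mem g ∧ nrm g ≤ nrm f
  symm : ∀ f g, Mem f → rearr D g = rearr D f → Mem g ∧ nrm g = nrm f
  dil_mem : ∀ (τ : ℝ) (f), 0 < τ → Mem f → Mem (dl τ f)
  dil_nrm : ∀ (τ : ℝ) (f), 0 < τ → Mem f → nrm (dl τ f) ≤ max 1 τ * nrm f

/-- The dilation functional `φ(x) = lim_{s→∞} (1/s) ‖σ_s(x*)‖_E`. -/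
noncomputable def phi {D : Set ℝ} {dl : ℝ → (ℝ → ℝ) → ℝ → ℝ}
    (E : SymmSpace D dl) (x : ℝ → ℝ) : ℝ :=
  limUnder atTop (fun s : ℝ => (1 / s) * E.nrm (dl s (rearr D x)))

/-- `E` is strictly symmetric: submajorization of members decreases the norm. -/
def StrictlySymm {D : Set ℝ} {dl : ℝ → (ℝ → ℝ) → ℝ → ℝ} (E : SymmSpace D dl) : Prop :=
  ∀ f g, E.Mem f → E.Mem g → submaj D f g → E.nrm g ≤ E.nrm f

/-- `E` is fully symmetric: any `g ∈ L¹+L∞` submajorized by a member is a member,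
with smaller norm. -/
def FullySymm {D : Set ℝ} {dl : ℝ → (ℝ → ℝ) → ℝ → ℝ} (E : SymmSpace D dl) : Prop :=
  ∀ f g, E.Mem f → Measurable g → MemL1L D g → submaj D f g → E.Mem g ∧ E.nrm g ≤ E.nrm f

/-- `D` is `(0,1)` with its dilation, or `(0,∞)` with its dilation. -/
def EitherDom (D : Set ℝ) (dl : ℝ → (ℝ → ℝ) → ℝ → ℝ) : Prop :=
  (D = Set.Ioo (0:ℝ) 1 ∧ dl = dilOne) ∨ (D = Set.Ioi (0:ℝ) ∧ dl = dilInf)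

/-- `Q'(x)`: the norm closure (in `E`) of the convex hull of the set of nonnegative
functions equimeasurable with `x`. -/
def Qprime {D : Set ℝ} {dl : ℝ → (ℝ → ℝ) → ℝ → ℝ}
    (E : SymmSpace D dl) (x : ℝ → ℝ) : Set (ℝ → ℝ) :=
  {y | E.Mem y ∧ ∀ ε : ℝ, 0 < ε → ∃ z ∈ convexHull ℝ
      {u : ℝ → ℝ | E.Mem u ∧ (∀ t ∈ D, 0 ≤ u t) ∧ rearr D u = rearr D x},
      E.nrm (y - z) < ε}

/-- Luxemburg norm of the Orlicz space `L_M` on `(0,1)`. -/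
noncomputable def luxNorm (M : ℝ → ℝ) (f : ℝ → ℝ) : ℝ :=
  sInf {lam : ℝ | 0 < lam ∧
    ∫⁻ t in Set.Ioo (0:ℝ) 1, ENNReal.ofReal (M (|f t| / lam)) ≤ 1}


private lemma lintegral_dilAux (g : ℝ → ENNReal) (s : ℝ) (hs : 0 < s)
    (hg : AEMeasurable g (volume.restrict (Set.Ioo (0:ℝ) (1/s)))) :
    ∫⁻ t in Set.Ioo (0:ℝ) 1, g (t / s) =
      ENNReal.ofReal s * ∫⁻ u in Set.Ioo (0:ℝ) (1/s), g u := by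
  have hT : (fun t : ℝ => t / s) = fun t => s⁻¹ * t := by
    funext t; rw [div_eq_mul_inv, mul_comm]
  have hmap : Measure.map (fun t : ℝ => t / s) volume = ENNReal.ofReal s • volume := by
    rw [hT]
    have h := Real.map_volume_mul_left (a := s⁻¹) (inv_ne_zero hs.ne')
    rwa [inv_inv, abs_of_pos hs] at h
  have hpre : (fun t : ℝ => t / s) ⁻¹' Set.Ioo 0 (1/s) = Set.Ioo (0:ℝ) 1 := by
    ext t
    simp only [Set.mem_preimage, Set.mem_Ioo]
    constructor
    · rintro ⟨h1, h2⟩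
      have ht : 0 < t := by
        have := mul_pos h1 hs
        rwa [div_mul_cancel₀ _ hs.ne'] at this
      have ht1 : t < 1 := by
        have := mul_lt_mul_of_pos_right h2 hs
        rwa [div_mul_cancel₀ _ hs.ne', one_div_mul_cancel hs.ne'] at this
      exact ⟨ht, ht1⟩
    · rintro ⟨h1, h2⟩
      exact ⟨div_pos h1 hs, by gcongr⟩
  have hres : (volume.restrict (Set.Ioo (0:ℝ) 1)).map (fun t : ℝ => t / s)
      = ENNReal.ofReal s • volume.restrict (Set.Ioo (0:ℝ) (1/s)) := by
    have hTm : Measurable fun t : ℝ => t / s := by fun_prop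
    rw [← hpre, ← Measure.restrict_map hTm measurableSet_Ioo, hmap,
      Measure.restrict_smul]
  have hg' : AEMeasurable g ((volume.restrict (Set.Ioo (0:ℝ) 1)).map (fun t : ℝ => t / s)) := by
    rw [hres]; exact hg.smul_measure _
  calc ∫⁻ t in Set.Ioo (0:ℝ) 1, g (t / s)
      = ∫⁻ u, g u ∂((volume.restrict (Set.Ioo (0:ℝ) 1)).map (fun t : ℝ => t / s)) :=
        (lintegral_map' hg' (by fun_prop : Measurable fun t : ℝ => t / s).aemeasurable).symm
    _ = ENNReal.ofReal s * ∫⁻ u in Set.Ioo (0:ℝ) (1/s), g u := by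
        rw [hres, lintegral_smul_measure, smul_eq_mul]

/-- for an Orlicz space `L_M` on `(0,1)` (with `M` convex, vanishing
only at `0`, `M(t)/t → 0` as `t → 0⁺` and `t/M(t) → 0` as `t → ∞`), one has
`φ(x) = lim_{n→∞} (1/n)‖σ_n(x*)‖_{L_M} = 0` for every `x ∈ L_M`. -/
theorem stmt18 (M : ℝ → ℝ) (hconv : ConvexOn ℝ (Set.Ici 0) M) (hM0 : M 0 = 0)
    (hMpos : ∀ t : ℝ, 0 < t → 0 < M t)
    (h0 : Tendsto (fun t : ℝ => M t / t) (nhdsWithin 0 (Set.Ioi 0)) (nhds 0))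
    (hinfty : Tendsto (fun t : ℝ => t / M t) atTop (nhds 0))
    (x : ℝ → ℝ) (hxm : Measurable x)
    (hx : ∃ lam : ℝ, 0 < lam ∧
      ∫⁻ t in Set.Ioo (0:ℝ) 1, ENNReal.ofReal (M (|x t| / lam)) ≤ 1) :
    Tendsto (fun s : ℝ => (1 / s) * luxNorm M (dilOne s (rearr (Set.Ioo 0 1) x)))
      atTop (nhds 0) := by
  classical
  obtain ⟨lam, hlam, hint⟩ := hx
  set y : ℝ → ℝ := rearr (Set.Ioo 0 1) x with hy
  -- Basic facts about M
  have hMnn : ∀ r : ℝ, 0 ≤ r → 0 ≤ M r := by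
    intro r hr
    rcases hr.eq_or_lt with h | h
    · rw [← h, hM0]
    · exact (hMpos r h).le
  have hMscale : ∀ c r : ℝ, 0 ≤ c → c ≤ 1 → 0 ≤ r → M (c * r) ≤ c * M r := by
    intro c r hc hc1 hr
    have h := hconv.2 (Set.self_mem_Ici) (Set.mem_Ici.mpr hr) (by linarith : (0:ℝ) ≤ 1 - c) hc
      (by ring)
    simp only [smul_eq_mul, mul_zero, zero_add, hM0] at h
    linarith [h]
  have hMmono : ∀ a b : ℝ, 0 ≤ a → a ≤ b → M a ≤ M b := by
    intro a b ha hab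
    rcases (ha.trans hab).eq_or_lt with h | hb
    · have hb0 : b = 0 := h.symm
      have ha0 : a = 0 := le_antisymm (hab.trans hb0.le) ha
      rw [ha0, hb0]
    · have hc : a / b ≤ 1 := (div_le_one hb).mpr hab
      have := hMscale (a / b) b (div_nonneg ha hb.le) hc hb.le
      rw [div_mul_cancel₀ _ hb.ne'] at this
      calc M a ≤ (a / b) * M b := this
        _ ≤ 1 * M b := by
            apply mul_le_mul_of_nonneg_right hc (hMnn b hb.le)
        _ = M b := one_mul _
  set N : ℝ → ℝ := fun r => M (max r 0) with hN
  have hNmono : Monotone N := fun a b hab => hMmono _ _ (le_max_right _ _)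
    (max_le_max hab le_rfl)
  have hNmeas : Measurable N := hNmono.measurable
  have hNeq : ∀ r : ℝ, 0 ≤ r → N r = M r := fun r hr => by
    simp only [hN, max_eq_left hr]
  have hNnn : ∀ r : ℝ, 0 ≤ N r := fun r => hMnn _ (le_max_right _ _)
  -- distribution sets of x
  have hdm : ∀ r : ℝ, MeasurableSet {u : ℝ | u ∈ Set.Ioo (0:ℝ) 1 ∧ r ≤ |x u|} := by
    intro r
    exact MeasurableSet.inter measurableSet_Ioo
      (measurableSet_le measurable_const hxm.abs)
  have hdfin : ∀ r : ℝ, volume {u : ℝ | u ∈ Set.Ioo (0:ℝ) 1 ∧ r ≤ |x u|} ≠ ⊤ := by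
    intro r
    refine ne_top_of_le_ne_top ?_ (measure_mono (fun u hu => hu.1))
    simp [Real.volume_Ioo]
  have hd0 : Tendsto (fun n : ℕ => volume {u : ℝ | u ∈ Set.Ioo (0:ℝ) 1 ∧ (n:ℝ) ≤ |x u|})
      atTop (nhds 0) := by
    have hanti : Antitone (fun n : ℕ => {u : ℝ | u ∈ Set.Ioo (0:ℝ) 1 ∧ (n:ℝ) ≤ |x u|}) := by
      intro n m hnm u hu
      exact ⟨hu.1, le_trans (by exact_mod_cast hnm) hu.2⟩
    have h := tendsto_measure_iInter_atTop (μ := volume)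
      (s := fun n : ℕ => {u : ℝ | u ∈ Set.Ioo (0:ℝ) 1 ∧ (n:ℝ) ≤ |x u|})
      (fun n => (hdm n).nullMeasurableSet) hanti ⟨0, hdfin _⟩
    have hempty : ⋂ n : ℕ, {u : ℝ | u ∈ Set.Ioo (0:ℝ) 1 ∧ (n:ℝ) ≤ |x u|} = ∅ := by
      ext u
      simp only [Set.mem_iInter, Set.mem_setOf_eq, Set.mem_empty_iff_false, iff_false]
      intro h'
      obtain ⟨n, hn⟩ := exists_nat_gt |x u|
      exact absurd ((h' n).2) (not_le.mpr hn)
    rw [hempty, measure_empty] at h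
    exact h
  have hSne : ∀ t : ℝ, 0 < t →
      {r : ℝ | 0 ≤ r ∧ volume {u : ℝ | u ∈ Set.Ioo (0:ℝ) 1 ∧ r ≤ |x u|}
        ≤ ENNReal.ofReal t}.Nonempty := by
    intro t ht
    obtain ⟨n, hn⟩ := (hd0.eventually_lt_const (ENNReal.ofReal_pos.mpr ht)).exists
    exact ⟨n, n.cast_nonneg, hn.le⟩
  -- properties of the rearrangement
  have hyn : ∀ t : ℝ, 0 ≤ y t := fun t => Real.sInf_nonneg fun r hr => hr.1
  have hyanti : ∀ t t' : ℝ, 0 < t → t ≤ t' → y t' ≤ y t := by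
    intro t t' ht htt'
    refine csInf_le_csInf ⟨0, fun r hr => hr.1⟩ (hSne t ht) ?_
    intro r hr
    exact ⟨hr.1, hr.2.trans (ENNReal.ofReal_le_ofReal htt')⟩
  -- core distribution estimate
  have hcore : ∀ s : ℝ, 0 ≤ s →
      volume {t : ℝ | t ∈ Set.Ioo (0:ℝ) 1 ∧ s < y t}
        ≤ volume {u : ℝ | u ∈ Set.Ioo (0:ℝ) 1 ∧ s ≤ |x u|} := by
    intro s hs
    have hfin := hdfin s
    have hsub : {t : ℝ | t ∈ Set.Ioo (0:ℝ) 1 ∧ s < y t} ⊆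
        Set.Ioo 0 (volume {u : ℝ | u ∈ Set.Ioo (0:ℝ) 1 ∧ s ≤ |x u|}).toReal := by
      rintro t ⟨htD, hty⟩
      have h1 : ¬ volume {u : ℝ | u ∈ Set.Ioo (0:ℝ) 1 ∧ s ≤ |x u|} ≤ ENNReal.ofReal t := by
        intro hle
        have hle' : y t ≤ s := csInf_le ⟨0, fun r hr => hr.1⟩ ⟨hs, hle⟩
        exact absurd hty (not_lt.mpr hle')
      have h2 := lt_of_not_ge h1
      exact ⟨htD.1, (ENNReal.ofReal_lt_iff_lt_toReal htD.1.le hfin).mp h2⟩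
    calc volume {t : ℝ | t ∈ Set.Ioo (0:ℝ) 1 ∧ s < y t}
        ≤ volume (Set.Ioo 0 (volume {u : ℝ | u ∈ Set.Ioo (0:ℝ) 1 ∧ s ≤ |x u|}).toReal) :=
          measure_mono hsub
      _ ≤ volume {u : ℝ | u ∈ Set.Ioo (0:ℝ) 1 ∧ s ≤ |x u|} := by
          rw [Real.volume_Ioo, sub_zero, ENNReal.ofReal_toReal hfin]
  -- open level sets
  have hopen : ∀ s : ℝ, 0 ≤ s →
      volume {t : ℝ | t ∈ Set.Ioo (0:ℝ) 1 ∧ s < y t}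
        ≤ volume {u : ℝ | u ∈ Set.Ioo (0:ℝ) 1 ∧ s < |x u|} := by
    intro s hs
    have hUnion : {t : ℝ | t ∈ Set.Ioo (0:ℝ) 1 ∧ s < y t}
        = ⋃ n : ℕ, {t : ℝ | t ∈ Set.Ioo (0:ℝ) 1 ∧ s + 1/(n+1) < y t} := by
      ext t
      simp only [Set.mem_iUnion, Set.mem_setOf_eq]
      constructor
      · rintro ⟨h1, h2⟩
        obtain ⟨n, hn⟩ := exists_nat_one_div_lt (sub_pos.mpr h2)
        exact ⟨n, h1, by linarith⟩
      · rintro ⟨n, h1, h2⟩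
        have hp : 0 < 1/((n:ℝ)+1) := by positivity
        exact ⟨h1, by linarith⟩
    have hmono : Monotone (fun n : ℕ => {t : ℝ | t ∈ Set.Ioo (0:ℝ) 1 ∧ s + 1/(n+1) < y t}) := by
      intro n m hnm t ht
      have h1 : 1/((m:ℝ)+1) ≤ 1/((n:ℝ)+1) := by
        apply one_div_le_one_div_of_le (by positivity)
        exact_mod_cast add_le_add_left (Nat.cast_le.mpr hnm) 1
      exact ⟨ht.1, lt_of_le_of_lt (by linarith) ht.2⟩
    rw [hUnion, Monotone.measure_iUnion hmono]
    apply iSup_le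
    intro n
    refine le_trans (hcore _ (by positivity)) (measure_mono fun u hu => ⟨hu.1, ?_⟩)
    have hp : 0 < 1/((n:ℝ)+1) := by positivity
    linarith [hu.2]
  -- closed level sets
  have hclosed : ∀ s : ℝ, 0 < s →
      volume {t : ℝ | t ∈ Set.Ioo (0:ℝ) 1 ∧ s ≤ y t}
        ≤ volume {u : ℝ | u ∈ Set.Ioo (0:ℝ) 1 ∧ s ≤ |x u|} := by
    intro s hs
    have key : ∀ n : ℕ, volume {t : ℝ | t ∈ Set.Ioo (0:ℝ) 1 ∧ s ≤ y t}
        ≤ volume {u : ℝ | u ∈ Set.Ioo (0:ℝ) 1 ∧ s - s/(n+2) ≤ |x u|} := by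
      intro n
      have hp : 0 < s/((n:ℝ)+2) := by positivity
      have h1 : (0:ℝ) ≤ s - s/(n+2) := by
        have := div_le_self hs.le (by linarith [Nat.cast_nonneg (α := ℝ) n] : (1:ℝ) ≤ (n:ℝ)+2)
        linarith
      calc volume {t : ℝ | t ∈ Set.Ioo (0:ℝ) 1 ∧ s ≤ y t}
          ≤ volume {t : ℝ | t ∈ Set.Ioo (0:ℝ) 1 ∧ s - s/(n+2) < y t} :=
            measure_mono (fun t ht => ⟨ht.1, lt_of_lt_of_le (by linarith) ht.2⟩)
        _ ≤ volume {u : ℝ | u ∈ Set.Ioo (0:ℝ) 1 ∧ s - s/(n+2) ≤ |x u|} := hcore _ h1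
    have hanti : Antitone (fun n : ℕ => {u : ℝ | u ∈ Set.Ioo (0:ℝ) 1 ∧ s - s/(n+2) ≤ |x u|}) := by
      intro n m hnm u hu
      have h1 : s/((m:ℝ)+2) ≤ s/((n:ℝ)+2) := by
        apply div_le_div_of_nonneg_left hs.le (by positivity)
        exact_mod_cast add_le_add_left (Nat.cast_le.mpr hnm) 2
      exact ⟨hu.1, le_trans (by linarith) hu.2⟩
    have hiInter : ⋂ n : ℕ, {u : ℝ | u ∈ Set.Ioo (0:ℝ) 1 ∧ s - s/(n+2) ≤ |x u|}
        = {u : ℝ | u ∈ Set.Ioo (0:ℝ) 1 ∧ s ≤ |x u|} := by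
      ext u
      simp only [Set.mem_iInter, Set.mem_setOf_eq]
      constructor
      · intro h
        refine ⟨(h 0).1, ?_⟩
        by_contra hlt
        push_neg at hlt
        obtain ⟨n, hn⟩ := exists_nat_one_div_lt (div_pos (by linarith : 0 < s - |x u|) hs)
        have h2 : s/((n:ℝ)+2) < s - |x u| := by
          have h3 : s/((n:ℝ)+2) ≤ s/((n:ℝ)+1) :=
            div_le_div_of_nonneg_left hs.le (by positivity) (by linarith)
          have h4 : s * (1/((n:ℝ)+1)) < s * ((s - |x u|)/s) :=
            mul_lt_mul_of_pos_left hn hs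
          rw [mul_one_div] at h4
          rw [mul_div_cancel₀ _ hs.ne'] at h4
          linarith
        have := (h n).2
        linarith
      · intro h n
        have hp : 0 < s/((n:ℝ)+2) := by positivity
        exact ⟨h.1, le_trans (by linarith) h.2⟩
    have hInf := Antitone.measure_iInter (μ := volume)
      (s := fun n : ℕ => {u : ℝ | u ∈ Set.Ioo (0:ℝ) 1 ∧ s - s/(n+2) ≤ |x u|})
      hanti (fun n => (hdm _).nullMeasurableSet) ⟨0, hdfin _⟩
    rw [hiInter] at hInf
    exact le_trans (le_iInf key) hInf.ge
  -- level comparison after composing with N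
  have hlevel : ∀ a : ℝ, 0 < a →
      volume ({t : ℝ | a < N (y t / lam)} ∩ Set.Ioo 0 1)
        ≤ volume ({u : ℝ | a < N (|x u| / lam)} ∩ Set.Ioo 0 1) := by
    intro a ha
    set S : Set ℝ := {r | a < N r} with hSdef
    have hSpos : ∀ r ∈ S, 0 < r := by
      intro r hr
      by_contra h
      push_neg at h
      have hN0 : N r = 0 := by
        simp only [hN, max_eq_right h, hM0]
      have : a < 0 := by
        have := hr
        simp only [hSdef, Set.mem_setOf_eq, hN0] at this
        exact this
      linarith
    rcases Set.eq_empty_or_nonempty S with hSe | hSne'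
    · have h0 : {t : ℝ | a < N (y t / lam)} = ∅ := by
        ext t
        simp only [Set.mem_setOf_eq, Set.mem_empty_iff_false, iff_false, not_lt]
        by_contra h
        push_neg at h
        exact absurd (show y t / lam ∈ S from h) (by rw [hSe]; exact Set.notMem_empty _)
      rw [h0]
      simp
    · have hbdd : BddBelow S := ⟨0, fun r hr => (hSpos r hr).le⟩
      set c : ℝ := sInf S with hcdef
      have hc0 : 0 ≤ c := le_csInf hSne' fun r hr => (hSpos r hr).le
      by_cases hcS : c ∈ S
      · -- S = [c, ∞)
        have hcpos : 0 < c := hSpos c hcS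
        have h1 : {t : ℝ | a < N (y t / lam)} ∩ Set.Ioo 0 1
            ⊆ {t : ℝ | t ∈ Set.Ioo (0:ℝ) 1 ∧ c * lam ≤ y t} := by
          rintro t ⟨ht, htD⟩
          refine ⟨htD, ?_⟩
          have hm : c ≤ y t / lam := csInf_le hbdd ht
          calc c * lam ≤ (y t / lam) * lam := mul_le_mul_of_nonneg_right hm hlam.le
            _ = y t := div_mul_cancel₀ _ hlam.ne'
        have h2 : {u : ℝ | u ∈ Set.Ioo (0:ℝ) 1 ∧ c * lam ≤ |x u|}
            ⊆ {u : ℝ | a < N (|x u| / lam)} ∩ Set.Ioo 0 1 := by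
          rintro u ⟨huD, hu⟩
          refine ⟨?_, huD⟩
          have hm : c ≤ |x u| / lam := (le_div_iff₀ hlam).mpr hu
          exact lt_of_lt_of_le hcS (hNmono hm)
        calc volume ({t : ℝ | a < N (y t / lam)} ∩ Set.Ioo 0 1)
            ≤ volume {t : ℝ | t ∈ Set.Ioo (0:ℝ) 1 ∧ c * lam ≤ y t} := measure_mono h1
          _ ≤ volume {u : ℝ | u ∈ Set.Ioo (0:ℝ) 1 ∧ c * lam ≤ |x u|} :=
              hclosed _ (mul_pos hcpos hlam)
          _ ≤ volume ({u : ℝ | a < N (|x u| / lam)} ∩ Set.Ioo 0 1) := measure_mono h2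
      · -- S = (c, ∞)
        have h1 : {t : ℝ | a < N (y t / lam)} ∩ Set.Ioo 0 1
            ⊆ {t : ℝ | t ∈ Set.Ioo (0:ℝ) 1 ∧ c * lam < y t} := by
          rintro t ⟨ht, htD⟩
          refine ⟨htD, ?_⟩
          have hm : c ≤ y t / lam := csInf_le hbdd ht
          have hne : c ≠ y t / lam := by
            intro h
            exact hcS (h ▸ ht)
          have : c < y t / lam := lt_of_le_of_ne hm hne
          calc c * lam < (y t / lam) * lam := mul_lt_mul_of_pos_right this hlam
            _ = y t := div_mul_cancel₀ _ hlam.ne'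
        have h2 : {u : ℝ | u ∈ Set.Ioo (0:ℝ) 1 ∧ c * lam < |x u|}
            ⊆ {u : ℝ | a < N (|x u| / lam)} ∩ Set.Ioo 0 1 := by
          rintro u ⟨huD, hu⟩
          refine ⟨?_, huD⟩
          have hm : c < |x u| / lam := (lt_div_iff₀ hlam).mpr hu
          obtain ⟨r, hrS, hrlt⟩ := (csInf_lt_iff hbdd hSne').mp hm
          exact lt_of_lt_of_le hrS (hNmono hrlt.le)
        calc volume ({t : ℝ | a < N (y t / lam)} ∩ Set.Ioo 0 1)
            ≤ volume {t : ℝ | t ∈ Set.Ioo (0:ℝ) 1 ∧ c * lam < y t} := measure_mono h1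
          _ ≤ volume {u : ℝ | u ∈ Set.Ioo (0:ℝ) 1 ∧ c * lam < |x u|} :=
              hopen _ (mul_nonneg hc0 hlam.le)
          _ ≤ volume ({u : ℝ | a < N (|x u| / lam)} ∩ Set.Ioo 0 1) := measure_mono h2
  -- integral comparison: the rearrangement is in the unit ball as well
  have hymeas : AEMeasurable (fun t : ℝ => N (y t / lam))
      (volume.restrict (Set.Ioo (0:ℝ) 1)) := by
    apply aemeasurable_restrict_of_antitoneOn measurableSet_Ioo
    intro t ht t' ht' htt'
    apply hNmono
    have := hyanti t t' ht.1 htt'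
    gcongr
  have hxNmeas : Measurable (fun u : ℝ => N (|x u| / lam)) :=
    hNmeas.comp (hxm.abs.div_const lam)
  have hyint : ∫⁻ t in Set.Ioo (0:ℝ) 1, ENNReal.ofReal (N (y t / lam)) ≤ 1 := by
    rw [lintegral_eq_lintegral_meas_lt _ (ae_of_all _ fun t => hNnn _) hymeas]
    have hstep : ∫⁻ a in Set.Ioi (0:ℝ),
          (volume.restrict (Set.Ioo (0:ℝ) 1)) {t : ℝ | a < N (y t / lam)}
        ≤ ∫⁻ a in Set.Ioi (0:ℝ),
          (volume.restrict (Set.Ioo (0:ℝ) 1)) {u : ℝ | a < N (|x u| / lam)} := by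
      apply lintegral_mono_ae
      rw [ae_restrict_iff' measurableSet_Ioi]
      apply ae_of_all
      intro a ha
      rw [Measure.restrict_apply' measurableSet_Ioo, Measure.restrict_apply' measurableSet_Ioo]
      exact hlevel a ha
    refine le_trans hstep ?_
    rw [← lintegral_eq_lintegral_meas_lt _ (ae_of_all _ fun u => hNnn _) hxNmeas.aemeasurable]
    have hcongr : ∀ u : ℝ, ENNReal.ofReal (N (|x u| / lam)) = ENNReal.ofReal (M (|x u| / lam)) :=
      fun u => by rw [hNeq _ (div_nonneg (abs_nonneg _) hlam.le)]
    calc ∫⁻ u in Set.Ioo (0:ℝ) 1, ENNReal.ofReal (N (|x u| / lam))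
        = ∫⁻ u in Set.Ioo (0:ℝ) 1, ENNReal.ofReal (M (|x u| / lam)) := by
          apply lintegral_congr
          exact hcongr
      _ ≤ 1 := hint
  -- the density function and smallness near 0
  set g : ℝ → ENNReal := fun u => ENNReal.ofReal (N (y u / lam)) with hg
  have hgmeas : ∀ b : ℝ, AEMeasurable g (volume.restrict (Set.Ioo (0:ℝ) b)) := by
    intro b
    apply aemeasurable_restrict_of_antitoneOn measurableSet_Ioo
    intro t ht t' ht' htt'
    apply ENNReal.ofReal_le_ofReal
    apply hNmono
    have := hyanti t t' ht.1 htt'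
    gcongr
  set ν : Measure ℝ := volume.withDensity ((Set.Ioo (0:ℝ) 1).indicator g) with hν
  have hνapp : ∀ b : ℝ, b ≤ 1 → ν (Set.Ioo 0 b) = ∫⁻ u in Set.Ioo (0:ℝ) b, g u := by
    intro b hb1
    rw [hν, withDensity_apply _ measurableSet_Ioo, lintegral_indicator measurableSet_Ioo,
      Measure.restrict_restrict measurableSet_Ioo]
    congr 1
    rw [Set.Ioo_inter_Ioo, max_self, min_eq_right hb1]
  have hνfin : ν (Set.Ioo (0:ℝ) 1) ≠ ⊤ := by
    rw [hνapp 1 le_rfl]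
    exact ne_top_of_le_ne_top ENNReal.one_ne_top hyint
  have hGten : Tendsto (fun n : ℕ => ν (Set.Ioo (0:ℝ) (1/(n+1)))) atTop (nhds 0) := by
    have hanti : Antitone (fun n : ℕ => Set.Ioo (0:ℝ) (1/(n+1))) := by
      intro n m hnm
      apply Set.Ioo_subset_Ioo_right
      apply one_div_le_one_div_of_le (by positivity)
      exact_mod_cast add_le_add_left (Nat.cast_le.mpr hnm) 1
    have h := tendsto_measure_iInter_atTop (μ := ν)
      (s := fun n : ℕ => Set.Ioo (0:ℝ) (1/(n+1)))
      (fun n => measurableSet_Ioo.nullMeasurableSet) hanti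
      ⟨0, by
        refine ne_top_of_le_ne_top hνfin (measure_mono ?_)
        apply Set.Ioo_subset_Ioo_right
        norm_num⟩
    have hempty : ⋂ n : ℕ, Set.Ioo (0:ℝ) (1/((n:ℝ)+1)) = ∅ := by
      ext t
      simp only [Set.mem_iInter, Set.mem_Ioo, Set.mem_empty_iff_false, iff_false]
      intro h'
      obtain ⟨n, hn⟩ := exists_nat_one_div_lt (h' 0).1
      exact absurd ((h' n).2) (not_lt.mpr hn.le)
    rw [hempty, measure_empty] at h
    exact h
  -- main estimate
  rw [Metric.tendsto_atTop]
  intro ε hε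
  have hε2 : 0 < ε/2 := by linarith
  set δ : ENNReal := (ENNReal.ofReal (lam/(ε/2)) + 1)⁻¹ with hδ
  have hδpos : 0 < δ := ENNReal.inv_pos.mpr
    (ENNReal.add_ne_top.mpr ⟨ENNReal.ofReal_ne_top, ENNReal.one_ne_top⟩)
  obtain ⟨n₀, hn₀⟩ := (eventually_atTop.mp (hGten.eventually_lt_const hδpos))
  refine ⟨max (max 1 (lam/(ε/2))) ((n₀:ℝ)+1), ?_⟩
  intro s hs
  have hs1 : (1:ℝ) ≤ s := le_trans (le_trans (le_max_left _ _) (le_max_left _ _)) hs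
  have hs0 : 0 < s := lt_of_lt_of_le one_pos hs1
  have hslam : lam/(ε/2) ≤ s := le_trans (le_trans (le_max_right _ _) (le_max_left _ _)) hs
  have hsn : ((n₀:ℝ)+1) ≤ s := le_trans (le_max_right _ _) hs
  -- key integral bound
  have hmem : ∫⁻ t in Set.Ioo (0:ℝ) 1,
      ENNReal.ofReal (M (|dilOne s y t| / (s*(ε/2)))) ≤ 1 := by
    have hsε : 0 < s*(ε/2) := by positivity
    have hpt : ∀ t ∈ Set.Ioo (0:ℝ) 1, ENNReal.ofReal (M (|dilOne s y t| / (s*(ε/2))))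
        ≤ ENNReal.ofReal (lam/(s*(ε/2))) * g (t/s) := by
      intro t ht
      have hts : dilOne s y t = y (t/s) := by
        unfold dilOne
        rw [if_pos (le_min ht.2.le (ht.2.le.trans hs1))]
      rw [hts, abs_of_nonneg (hyn _)]
      have hc1 : lam/(s*(ε/2)) ≤ 1 := by
        rw [div_le_one hsε]
        calc lam = (lam/(ε/2))*(ε/2) := by rw [div_mul_cancel₀ _ hε2.ne']
          _ ≤ s*(ε/2) := mul_le_mul_of_nonneg_right hslam hε2.le
      have hkey : M (y (t/s) / (s*(ε/2))) ≤ (lam/(s*(ε/2))) * M (y (t/s)/lam) := by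
        have h := hMscale (lam/(s*(ε/2))) (y (t/s)/lam) (by positivity) hc1
          (div_nonneg (hyn _) hlam.le)
        have heq : lam/(s*(ε/2)) * (y (t/s)/lam) = y (t/s)/(s*(ε/2)) := by
          field_simp
        rwa [heq] at h
      calc ENNReal.ofReal (M (y (t/s)/(s*(ε/2))))
          ≤ ENNReal.ofReal ((lam/(s*(ε/2))) * M (y (t/s)/lam)) :=
            ENNReal.ofReal_le_ofReal hkey
        _ = ENNReal.ofReal (lam/(s*(ε/2))) * ENNReal.ofReal (M (y (t/s)/lam)) :=
            ENNReal.ofReal_mul (by positivity)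
        _ = ENNReal.ofReal (lam/(s*(ε/2))) * g (t/s) := by
            simp only [hg]
            rw [hNeq _ (div_nonneg (hyn _) hlam.le)]
    have hd1s : 1/s ≤ 1/((n₀:ℝ)+1) := one_div_le_one_div_of_le (by positivity) hsn
    have hd1s' : 1/((n₀:ℝ)+1) ≤ 1 := by
      rw [div_le_one (by positivity)]
      have hcast : (0:ℝ) ≤ (n₀:ℝ) := Nat.cast_nonneg n₀
      linarith
    calc ∫⁻ t in Set.Ioo (0:ℝ) 1, ENNReal.ofReal (M (|dilOne s y t| / (s*(ε/2))))
        ≤ ∫⁻ t in Set.Ioo (0:ℝ) 1, ENNReal.ofReal (lam/(s*(ε/2))) * g (t/s) :=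
          lintegral_mono_ae ((ae_restrict_iff' measurableSet_Ioo).mpr (ae_of_all _ hpt))
      _ = ENNReal.ofReal (lam/(s*(ε/2))) * ∫⁻ t in Set.Ioo (0:ℝ) 1, g (t/s) :=
          lintegral_const_mul' _ _ ENNReal.ofReal_ne_top
      _ = ENNReal.ofReal (lam/(s*(ε/2))) *
            (ENNReal.ofReal s * ∫⁻ u in Set.Ioo (0:ℝ) (1/s), g u) := by
          rw [lintegral_dilAux g s hs0 (hgmeas _)]
      _ = ENNReal.ofReal (lam/(ε/2)) * ∫⁻ u in Set.Ioo (0:ℝ) (1/s), g u := by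
          rw [← mul_assoc, ← ENNReal.ofReal_mul (by positivity)]
          congr 2
          field_simp
      _ ≤ ENNReal.ofReal (lam/(ε/2)) * ν (Set.Ioo (0:ℝ) (1/((n₀:ℝ)+1))) := by
          apply mul_le_mul_right
          rw [hνapp _ hd1s']
          exact lintegral_mono' (Measure.restrict_mono (Set.Ioo_subset_Ioo_right hd1s) le_rfl)
            le_rfl
      _ ≤ ENNReal.ofReal (lam/(ε/2)) * δ := by
          apply mul_le_mul_right
          exact (hn₀ n₀ le_rfl).le
      _ ≤ 1 := by
          rw [hδ]
          calc ENNReal.ofReal (lam/(ε/2)) * (ENNReal.ofReal (lam/(ε/2)) + 1)⁻¹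
              ≤ (ENNReal.ofReal (lam/(ε/2)) + 1) * (ENNReal.ofReal (lam/(ε/2)) + 1)⁻¹ :=
                mul_le_mul_left le_self_add _
            _ ≤ 1 := ENNReal.mul_inv_le_one _
  have hlux : luxNorm M (dilOne s y) ≤ s * (ε/2) := by
    apply csInf_le ⟨0, fun b hb => hb.1.le⟩
    exact ⟨by positivity, hmem⟩
  have hluxnn : 0 ≤ luxNorm M (dilOne s y) := Real.sInf_nonneg fun b hb => hb.1.le
  have hbound : (1/s) * luxNorm M (dilOne s y) ≤ ε/2 := by
    calc (1/s) * luxNorm M (dilOne s y) ≤ (1/s) * (s * (ε/2)) :=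
          mul_le_mul_of_nonneg_left hlux (by positivity)
      _ = ε/2 := by field_simp
  rw [Real.dist_eq, sub_zero, abs_of_nonneg (mul_nonneg (by positivity) hluxnn)]
  linarith
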